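/- Let T be a linear isomorphism of a finite-dimensional normed real vector space and let Z belong to the sum of generalized eigenspaces for eigenvalues of absolute value exactly 1. Then for every a > 0 and every σ ∈ (0,1), |Tⁿ Z| · σ^{a|n|} → 0 as n → ±∞. -/

import Mathlib

open Filter

/-- Polynomial growth bound for generalized eigenvectors of eigenvalues on the unit circle. -/
private lemma poly_bound {E : Type*} [NormedAddCommGroup E] [NormedSpace ℂ E]
    (f : Module.End ℂ E) (α : ℂ) (hα : ‖α‖ = 1) (k : ℕ) :
    ∀ Z : E, ((f - α • (1 : Module.End ℂ E)) ^ k) Z = 0 →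
      ∃ C : ℝ, 0 ≤ C ∧ ∀ n : ℕ, ‖(f ^ n) Z‖ ≤ C * (n + 1 : ℝ) ^ k := by
  induction k with
  | zero =>
    intro Z h
    simp only [pow_zero, Module.End.one_apply] at h
    exact ⟨0, le_refl 0, fun n => by simp [h]⟩
  | succ k ih =>
    intro Z h
    set W : E := (f - α • (1 : Module.End ℂ E)) Z with hW
    have hWk : ((f - α • (1 : Module.End ℂ E)) ^ k) W = 0 := by
      rw [hW, ← Module.End.mul_apply, ← pow_succ]
      exact h
    obtain ⟨C, hC0, hC⟩ := ih W hWk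
    have hfZ : f Z = α • Z + W := by
      simp [hW, sub_smul]
    -- key recurrence bound
    have key : ∀ n : ℕ, ‖(f ^ n) Z‖ ≤ ‖Z‖ + C * n * (n + 1 : ℝ) ^ k := by
      intro n
      induction n with
      | zero => simp
      | succ n ihn =>
        have h1 : (f ^ (n + 1)) Z = α • (f ^ n) Z + (f ^ n) W := by
          rw [pow_succ, Module.End.mul_apply, hfZ, map_add, map_smul]
        have h2 : ‖(f ^ (n + 1)) Z‖ ≤ ‖(f ^ n) Z‖ + ‖(f ^ n) W‖ := by
          rw [h1]
          refine (norm_add_le _ _).trans ?_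
          rw [norm_smul, hα, one_mul]
        have h3 := hC n
        have h4 : ((n : ℝ) + 1) ^ k ≤ ((n : ℝ) + 1 + 1) ^ k := by
          apply pow_le_pow_left₀ (by positivity) (by linarith)
        push_cast
        have hnn : (0 : ℝ) ≤ (n : ℝ) := n.cast_nonneg
        have hpk : (0 : ℝ) < ((n : ℝ) + 1) ^ k := by positivity
        nlinarith [mul_le_mul_of_nonneg_left h4 (mul_nonneg hC0 hnn),
          mul_le_mul_of_nonneg_left h4 hC0]
    refine ⟨‖Z‖ + C, add_nonneg (norm_nonneg Z) hC0, fun n => ?_⟩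
    have h5 := key n
    have h6 : (1 : ℝ) ≤ ((n : ℝ) + 1) := by linarith [n.cast_nonneg (α := ℝ)]
    have h7 : (1 : ℝ) ≤ ((n : ℝ) + 1) ^ k := one_le_pow₀ h6
    have h8 : ((n : ℝ) + 1) ^ (k + 1) = ((n : ℝ) + 1) ^ k * ((n : ℝ) + 1) := pow_succ _ _
    have hA : ‖Z‖ * 1 ≤ ‖Z‖ * (((n : ℝ) + 1) ^ k * ((n : ℝ) + 1)) := by
      apply mul_le_mul_of_nonneg_left _ (norm_nonneg Z)
      nlinarith
    have hB : C * ((n : ℝ) * ((n : ℝ) + 1) ^ k) ≤ C * (((n : ℝ) + 1) ^ k * ((n : ℝ) + 1)) := by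
      apply mul_le_mul_of_nonneg_left _ hC0
      nlinarith [n.cast_nonneg (α := ℝ)]
    push_cast
    rw [h8, add_mul]
    nlinarith [hA, hB, h5]

private def PolyB (u : ℕ → ℝ) : Prop := ∃ C : ℝ, ∃ k : ℕ, 0 ≤ C ∧ ∀ n : ℕ, u n ≤ C * (n + 1 : ℝ) ^ k

private lemma PolyB.add {u v : ℕ → ℝ} (hu : PolyB u) (hv : PolyB v) :
    PolyB (fun n => u n + v n) := by
  obtain ⟨C1, k1, h10, h1⟩ := hu
  obtain ⟨C2, k2, h20, h2⟩ := hv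
  refine ⟨C1 + C2, max k1 k2, by positivity, fun n => ?_⟩
  have h6 : (1 : ℝ) ≤ (n : ℝ) + 1 := by linarith [n.cast_nonneg (α := ℝ)]
  have e1 : ((n : ℝ) + 1) ^ k1 ≤ ((n : ℝ) + 1) ^ (max k1 k2) :=
    pow_le_pow_right₀ h6 (le_max_left _ _)
  have e2 : ((n : ℝ) + 1) ^ k2 ≤ ((n : ℝ) + 1) ^ (max k1 k2) :=
    pow_le_pow_right₀ h6 (le_max_right _ _)
  have := mul_le_mul_of_nonneg_left e1 h10
  have := mul_le_mul_of_nonneg_left e2 h20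
  have := h1 n
  have := h2 n
  simp only [add_mul]
  linarith

private lemma PolyB.of_le {u v : ℕ → ℝ} (h : ∀ n, u n ≤ v n) (hv : PolyB v) : PolyB u := by
  obtain ⟨C, k, hC0, hC⟩ := hv
  exact ⟨C, k, hC0, fun n => (h n).trans (hC n)⟩

private lemma PolyB.zero : PolyB (fun _ : ℕ => (0 : ℝ)) :=
  ⟨0, 0, le_refl 0, fun n => by simp⟩

/-- Division by `ρ ^ n` of a polynomially bounded nonnegative sequence tends to zero. -/
private lemma tendsto_div_pow {u : ℕ → ℝ} (hu0 : ∀ n, 0 ≤ u n) (hu : PolyB u)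
    {ρ : ℝ} (hρ : 1 < ρ) :
    Tendsto (fun n : ℕ => u n / ρ ^ n) atTop (nhds 0) := by
  obtain ⟨C, k, hC0, hC⟩ := hu
  have hρ0 : 0 < ρ := lt_trans one_pos hρ
  have h1 : Tendsto (fun n : ℕ => ((n : ℝ)) ^ k / ρ ^ n) atTop (nhds 0) :=
    tendsto_pow_const_div_const_pow_of_one_lt k hρ
  have h2 : Tendsto (fun n : ℕ => (((n + 1 : ℕ) : ℝ)) ^ k / ρ ^ (n + 1)) atTop (nhds 0) :=
    h1.comp (tendsto_add_atTop_nat 1)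
  have h3 : Tendsto (fun n : ℕ => ρ * ((((n + 1 : ℕ) : ℝ)) ^ k / ρ ^ (n + 1))) atTop
      (nhds 0) := by simpa using h2.const_mul ρ
  have h4 : (fun n : ℕ => ((n : ℝ) + 1) ^ k / ρ ^ n)
      = fun n : ℕ => ρ * ((((n + 1 : ℕ) : ℝ)) ^ k / ρ ^ (n + 1)) := by
    funext n
    push_cast
    rw [pow_succ]
    field_simp
  have h5 : Tendsto (fun n : ℕ => ((n : ℝ) + 1) ^ k / ρ ^ n) atTop (nhds 0) := by
    rw [h4]; exact h3
  have hlim : Tendsto (fun n : ℕ => C * (((n : ℝ) + 1) ^ k / ρ ^ n)) atTop (nhds 0) := by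
    simpa using h5.const_mul C
  refine squeeze_zero (fun n => div_nonneg (hu0 n) (pow_nonneg hρ0.le n)) (fun n => ?_) hlim
  rw [← mul_div_assoc]
  gcongr
  exact hC n

/-- Generalized eigenvectors of `f` are generalized eigenvectors of an inverse of `f`. -/
private lemma inv_gen_eig {E : Type*} [NormedAddCommGroup E] [NormedSpace ℂ E]
    (f g : Module.End ℂ E) (hfg : f * g = 1) (hgf : g * f = 1)
    (α : ℂ) (hα0 : α ≠ 0) (k : ℕ) (Z : E) (h : ((f - α • 1) ^ k) Z = 0) :
    ((g - α⁻¹ • (1 : Module.End ℂ E)) ^ k) Z = 0 := by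
  have hid : g - α⁻¹ • (1 : Module.End ℂ E) = ((-α⁻¹) • g) * (f - α • 1) := by
    have h1 : g * (f - α • 1) = 1 - α • g := by
      rw [mul_sub, hgf, mul_smul_comm, mul_one]
    rw [smul_mul_assoc, h1, smul_sub, smul_smul]
    simp [neg_mul, inv_mul_cancel₀ hα0, neg_smul]
    abel
  have hcg : Commute g f := by
    unfold Commute SemiconjBy
    rw [hgf, hfg]
  have hcomm : Commute ((-α⁻¹) • g) (f - α • 1) :=
    ((hcg.sub_right ((Commute.one_right g).smul_right α))).smul_left _
  rw [hid, hcomm.mul_pow, Module.End.mul_apply, h, map_zero]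

private lemma equiv_pow_apply {E : Type*} [NormedAddCommGroup E] [NormedSpace ℂ E]
    (T : E ≃ₗ[ℂ] E) (m : ℕ) (x : E) :
    (T ^ m) x = (T.toLinearMap ^ m) x := by
  rw [LinearEquiv.pow_apply, Module.End.pow_apply]
  rfl

/-- Let `T` be a linear isomorphism of a finite-dimensional normed space and
let `Z` belong to the sum of the generalized eigenspaces of `T` for eigenvalues of absolute
value exactly `1`.  Then for every `a > 0` and `σ ∈ (0,1)`, `‖Tⁿ Z‖ · σ^(a |n|) → 0` as
`n → ± ∞`. -/
theorem center_subspace_subexponential {E : Type*} [NormedAddCommGroup E] [NormedSpace ℂ E]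
    [FiniteDimensional ℂ E] (T : E ≃ₗ[ℂ] E) (Z : E)
    (hZ : Z ∈ (⨆ (α : ℂ) (_ : ‖α‖ = 1),
        Module.End.maxGenEigenspace (T.toLinearMap) α)) :
    ∀ a : ℝ, 0 < a → ∀ σ : ℝ, σ ∈ Set.Ioo (0 : ℝ) 1 →
      (Tendsto (fun n : ℤ => ‖(T ^ n : E ≃ₗ[ℂ] E) Z‖ * σ ^ (a * |(n : ℝ)|)) atTop (nhds 0) ∧
       Tendsto (fun n : ℤ => ‖(T ^ n : E ≃ₗ[ℂ] E) Z‖ * σ ^ (a * |(n : ℝ)|)) atBot (nhds 0)) := by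
  intro a ha σ hσ
  obtain ⟨hσ0, hσ1⟩ := hσ
  set f := T.toLinearMap with hf
  set g := T.symm.toLinearMap with hg
  have hfg : f * g = 1 := by ext x; simp [hf, hg]
  have hgf : g * f = 1 := by ext x; simp [hf, hg]
  -- Polynomial growth bounds in both time directions
  have key : PolyB (fun n => ‖(f ^ n) Z‖) ∧ PolyB (fun n => ‖(g ^ n) Z‖) := by
    refine Submodule.iSup_induction
      (motive := fun x => PolyB (fun n => ‖(f ^ n) x‖) ∧ PolyB (fun n => ‖(g ^ n) x‖))
      _ hZ ?_ ?_ ?_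
    · intro α x hx
      by_cases hα : ‖α‖ = 1
      · rw [iSup_pos hα, Module.End.mem_maxGenEigenspace] at hx
        obtain ⟨k, hk⟩ := hx
        have hα0 : α ≠ 0 := by
          intro h0
          rw [h0, norm_zero] at hα
          exact one_ne_zero hα.symm
        have hαi : ‖α⁻¹‖ = 1 := by rw [norm_inv, hα, inv_one]
        refine ⟨?_, ?_⟩
        · obtain ⟨C, hC0, hC⟩ := poly_bound f α hα k x hk
          exact ⟨C, k, hC0, hC⟩
        · have hk' := inv_gen_eig f g hfg hgf α hα0 k x hk
          obtain ⟨C, hC0, hC⟩ := poly_bound g α⁻¹ hαi k x hk'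
          exact ⟨C, k, hC0, hC⟩
      · rw [iSup_neg hα] at hx
        obtain rfl : x = 0 := by simpa using hx
        exact ⟨PolyB.of_le (fun n => by simp) PolyB.zero,
          PolyB.of_le (fun n => by simp) PolyB.zero⟩
    · exact ⟨PolyB.of_le (fun n => by simp) PolyB.zero,
        PolyB.of_le (fun n => by simp) PolyB.zero⟩
    · rintro x y ⟨hx1, hx2⟩ ⟨hy1, hy2⟩
      constructor
      · refine PolyB.of_le (fun n => ?_) (hx1.add hy1)
        simp only [map_add]
        exact norm_add_le _ _
      · refine PolyB.of_le (fun n => ?_) (hx2.add hy2)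
        simp only [map_add]
        exact norm_add_le _ _
  set τ : ℝ := σ ^ a with hτdef
  have hτ0 : 0 < τ := Real.rpow_pos_of_pos hσ0 a
  have hτ1 : τ < 1 := Real.rpow_lt_one hσ0.le hσ1 ha
  set ρ : ℝ := τ⁻¹ with hρdef
  have hρ : 1 < ρ := (one_lt_inv₀ hτ0).mpr hτ1
  have Hf : Tendsto (fun m : ℕ => ‖(f ^ m) Z‖ / ρ ^ m) atTop (nhds 0) :=
    tendsto_div_pow (fun n => norm_nonneg _) key.1 hρ
  have Hg : Tendsto (fun m : ℕ => ‖(g ^ m) Z‖ / ρ ^ m) atTop (nhds 0) :=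
    tendsto_div_pow (fun n => norm_nonneg _) key.2 hρ
  have htn : Tendsto (fun n : ℤ => n.toNat) atTop atTop := by
    rw [tendsto_atTop_atTop]
    intro b
    exact ⟨(b : ℤ), fun a h => by omega⟩
  have htn' : Tendsto (fun n : ℤ => (-n).toNat) atBot atTop := by
    rw [tendsto_atBot_atTop]
    intro b
    exact ⟨-(b : ℤ), fun a h => by omega⟩
  have hσexp : ∀ m : ℕ, σ ^ (a * (m : ℝ)) = (ρ ^ m)⁻¹ := by
    intro m
    rw [Real.rpow_mul hσ0.le, ← hτdef, Real.rpow_natCast, hρdef, inv_pow, inv_inv]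
  constructor
  · refine Tendsto.congr' ?_ (Hf.comp htn)
    filter_upwards [eventually_ge_atTop (0 : ℤ)] with n hn
    have e0 : ((n.toNat : ℤ)) = n := Int.toNat_of_nonneg hn
    have e1 : (T ^ n) Z = (f ^ n.toNat) Z := by
      conv_lhs => rw [← e0, zpow_natCast]
      exact equiv_pow_apply T n.toNat Z
    have e2 : |((n : ℝ))| = (n.toNat : ℝ) := by
      rw [abs_of_nonneg (by exact_mod_cast hn)]
      exact_mod_cast e0.symm
    simp only [Function.comp_apply, e1, e2, hσexp, div_eq_mul_inv]
  · refine Tendsto.congr' ?_ (Hg.comp htn')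
    filter_upwards [eventually_le_atBot (0 : ℤ)] with n hn
    have e0 : (((-n).toNat : ℤ)) = -n := Int.toNat_of_nonneg (by omega)
    have e1 : (T ^ n) Z = (g ^ (-n).toNat) Z := by
      have : (T ^ n) = (T.symm ^ (-n).toNat) := by
        conv_lhs => rw [show n = -(((-n).toNat : ℤ)) by omega]
        rw [zpow_neg, zpow_natCast, ← inv_pow]
        rfl
      rw [this, equiv_pow_apply]
    have e2 : |((n : ℝ))| = ((-n).toNat : ℝ) := by
      rw [abs_of_nonpos (by exact_mod_cast hn)]
      exact_mod_cast e0.symm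
    simp only [Function.comp_apply, e1, e2, hσexp, div_eq_mul_inv]
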